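/- Let n be a positive integer, p and q primes, and u = p^t, v = q^k elements of {1,…,n} (t,k ≥ 1) whose degrees in D_n are both less than n−1. Then deg(u) = deg(v) if and only if v_p(n)+1 ≤ t, v_q(n)+1 ≤ k, and ⌊n/p^(v_p(n)+1)⌋ = ⌊n/q^(v_q(n)+1)⌋. -/

import Mathlib

def diophDeg (n u : ℕ) : ℕ :=
  ((Finset.Icc 1 n).filter (fun v => v ≠ u ∧ Nat.gcd u v ∣ n)).card

lemma degB (n p t : ℕ) (hn : 0 < n) (hp : p.Prime) (hun : p ^ t ∈ Finset.Icc 1 n)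
    (hle : t ≤ n.factorization p) : diophDeg n (p ^ t) = n - 1 := by
  have hdvd : p ^ t ∣ n := (Nat.Prime.pow_dvd_iff_le_factorization hp hn.ne').mpr hle
  have heq : ((Finset.Icc 1 n).filter (fun v => v ≠ p ^ t ∧ Nat.gcd (p ^ t) v ∣ n))
      = (Finset.Icc 1 n).erase (p ^ t) := by
    ext v
    simp only [Finset.mem_filter, Finset.mem_erase]
    constructor
    · rintro ⟨h1, h2, _⟩; exact ⟨h2, h1⟩
    · rintro ⟨h2, h1⟩; exact ⟨h1, h2, dvd_trans (Nat.gcd_dvd_left _ _) hdvd⟩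
  rw [diophDeg, heq, Finset.card_erase_of_mem hun, Nat.card_Icc]
  simp

lemma degA (n p t : ℕ) (hn : 0 < n) (hp : p.Prime) (hun : p ^ t ∈ Finset.Icc 1 n)
    (hgt : n.factorization p + 1 ≤ t) :
    diophDeg n (p ^ t) = n - n / p ^ (n.factorization p + 1) := by
  set e := n.factorization p with he
  have hkey : ∀ v, (¬ (v ≠ p ^ t ∧ Nat.gcd (p ^ t) v ∣ n)) ↔ p ^ (e + 1) ∣ v := by
    intro v
    constructor
    · intro h
      by_cases hv : v = p ^ t
      · subst hv; exact pow_dvd_pow p hgt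
      · have hg : ¬ Nat.gcd (p ^ t) v ∣ n := fun hd => h ⟨hv, hd⟩
        by_contra hnd
        obtain ⟨s, hs, hgs⟩ := (Nat.dvd_prime_pow hp).mp (Nat.gcd_dvd_left (p ^ t) v)
        have hsv : p ^ s ∣ v := hgs ▸ Nat.gcd_dvd_right _ _
        have hse : s ≤ e := by
          by_contra hse
          exact hnd (dvd_trans (pow_dvd_pow p (by omega)) hsv)
        exact hg (hgs ▸ (Nat.Prime.pow_dvd_iff_le_factorization hp hn.ne').mpr hse)
    · intro hdv h
      obtain ⟨_, hd⟩ := h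
      have h1 : p ^ (e + 1) ∣ Nat.gcd (p ^ t) v := Nat.dvd_gcd (pow_dvd_pow p hgt) hdv
      have h2 := (Nat.Prime.pow_dvd_iff_le_factorization hp hn.ne').mp (h1.trans hd)
      omega
  have hIcc : Finset.Icc 1 n = Finset.Ioc 0 n := by
    rw [← Finset.Icc_add_one_left_eq_Ioc, zero_add]
  have hfilter : ((Finset.Icc 1 n).filter
      (fun v => ¬ (v ≠ p ^ t ∧ Nat.gcd (p ^ t) v ∣ n))).card = n / p ^ (e + 1) := by
    have : ((Finset.Icc 1 n).filter (fun v => ¬ (v ≠ p ^ t ∧ Nat.gcd (p ^ t) v ∣ n)))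
        = (Finset.Ioc 0 n).filter (fun v => p ^ (e + 1) ∣ v) := by
      rw [hIcc]
      exact Finset.filter_congr (fun v _ => by simpa using hkey v)
    rw [this, Nat.Ioc_filter_dvd_card_eq_div]
  have htot := Finset.card_filter_add_card_filter_not
    (s := Finset.Icc 1 n) (p := fun v => v ≠ p ^ t ∧ Nat.gcd (p ^ t) v ∣ n)
  rw [hfilter, Nat.card_Icc] at htot
  unfold diophDeg
  omega

theorem stmt_15 (n p q t k : ℕ) (hn : 0 < n) (hp : p.Prime) (hq : q.Prime)
    (ht : 1 ≤ t) (hk : 1 ≤ k)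
    (hu : p ^ t ∈ Finset.Icc 1 n) (hv : q ^ k ∈ Finset.Icc 1 n)
    (hdu : diophDeg n (p ^ t) < n - 1) (hdv : diophDeg n (q ^ k) < n - 1) :
    diophDeg n (p ^ t) = diophDeg n (q ^ k) ↔
      (n.factorization p + 1 ≤ t ∧ n.factorization q + 1 ≤ k ∧
        n / p ^ (n.factorization p + 1) = n / q ^ (n.factorization q + 1)) := by
  have htp : n.factorization p + 1 ≤ t := by
    by_contra h
    rw [degB n p t hn hp hu (by omega)] at hdu
    omega
  have hkq : n.factorization q + 1 ≤ k := by
    by_contra h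
    rw [degB n q k hn hq hv (by omega)] at hdv
    omega
  rw [degA n p t hn hp hu htp, degA n q k hn hq hv hkq]
  have hpn : p ^ (n.factorization p + 1) ≤ n := le_trans
    (Nat.pow_le_pow_right hp.one_lt.le htp) (Finset.mem_Icc.mp hu).2
  have hqn : q ^ (n.factorization q + 1) ≤ n := le_trans
    (Nat.pow_le_pow_right hq.one_lt.le hkq) (Finset.mem_Icc.mp hv).2
  have h1 : 1 ≤ n / p ^ (n.factorization p + 1) := Nat.one_le_div_iff (pow_pos hp.pos _) |>.mpr hpn
  have h2 : 1 ≤ n / q ^ (n.factorization q + 1) := Nat.one_le_div_iff (pow_pos hq.pos _) |>.mpr hqn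
  have h3 : n / p ^ (n.factorization p + 1) ≤ n := Nat.div_le_self _ _
  have h4 : n / q ^ (n.factorization q + 1) ≤ n := Nat.div_le_self _ _
  constructor
  · intro h; exact ⟨htp, hkq, by omega⟩
  · rintro ⟨_, _, h⟩; omega
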